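/- Let C = ⋃_{i=1}^{s} C_i with C_i = ⋂_{j=1}^{r_i} {x ∈ ℝⁿ : b_{ij}(x) ≥ 0} be a practical semi-algebraic set. Let x ∈ C, let S = {i : x ∈ C_i}, and for i ∈ S let T_i = {j ∈ {1,…,r_i} : b_{ij}(x) = 0}; assume each T_i with i ∈ S is nonempty. Then T_C(x) = ⋃_{i∈S} ⋂_{j∈T_i} {z ∈ ℝⁿ : ∇b_{ij}(x)·z ≥ 0}. -/

import Mathlib

open Filter MvPolynomial

set_option maxHeartbeats 1000000

/-- The Euclidean-distance realization of a point of `ℝⁿ`. -/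
noncomputable def toEuc {n : ℕ} (x : Fin n → ℝ) : EuclideanSpace ℝ (Fin n) :=
  (EuclideanSpace.equiv (Fin n) ℝ).symm x

/-- The Bouligand tangent cone to `D ⊆ ℝⁿ` at `x`, with Euclidean distance. -/
noncomputable def tangentConeAt' {n : ℕ} (D : Set (Fin n → ℝ)) (x : Fin n → ℝ) :
    Set (Fin n → ℝ) :=
  {z | Filter.liminf (fun τ : ℝ => Metric.infDist (toEuc (x + τ • z)) (toEuc '' D) / τ)
        (nhdsWithin 0 (Set.Ioi (0 : ℝ))) = 0}

/-- The linearization of a multivariate polynomial at a point, as a continuous linear map. -/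
noncomputable def evalLin {n : ℕ} (p : MvPolynomial (Fin n) ℝ) (x : Fin n → ℝ) :
    (Fin n → ℝ) →L[ℝ] ℝ :=
  ∑ k, eval x (pderiv k p) • (ContinuousLinearMap.proj k : (Fin n → ℝ) →L[ℝ] ℝ)

lemma evalLin_apply {n : ℕ} (p : MvPolynomial (Fin n) ℝ) (x z : Fin n → ℝ) :
    evalLin p x z = ∑ k, eval x (pderiv k p) * z k := by
  simp [evalLin]

lemma hasFDerivAt_eval {n : ℕ} (p : MvPolynomial (Fin n) ℝ) (x : Fin n → ℝ) :
    HasFDerivAt (fun y => eval y p) (evalLin p x) x := by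
  induction p using MvPolynomial.induction_on with
  | C a =>
    simp only [eval_C]
    have : evalLin (C a : MvPolynomial (Fin n) ℝ) x = 0 := by
      ext z; simp [evalLin_apply]
    rw [this]; exact hasFDerivAt_const a x
  | add p q hp hq =>
    have : evalLin (p + q) x = evalLin p x + evalLin q x := by
      ext z; simp [evalLin_apply, Finset.sum_add_distrib, add_mul]
    simp only [eval_add, this]
    exact hp.add hq
  | mul_X p i hp =>
    have hX : HasFDerivAt (fun y : Fin n → ℝ => y i)
        (ContinuousLinearMap.proj i : (Fin n → ℝ) →L[ℝ] ℝ) x :=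
      (ContinuousLinearMap.proj i : (Fin n → ℝ) →L[ℝ] ℝ).hasFDerivAt
    have h := hp.mul hX
    have heq : evalLin (p * X i) x
        = eval x p • (ContinuousLinearMap.proj i : (Fin n → ℝ) →L[ℝ] ℝ)
          + x i • evalLin p x := by
      ext z
      simp only [ContinuousLinearMap.add_apply, ContinuousLinearMap.smul_apply,
        ContinuousLinearMap.proj_apply, evalLin_apply, smul_eq_mul, Finset.mul_sum]
      have hsum : ∀ k : Fin n, eval x (pderiv k (p * X i)) * z k
          = eval x (pderiv k p) * x i * z k
            + (if k = i then eval x p * z i else 0) := by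
        intro k
        rw [pderiv_mul, pderiv_X]
        by_cases hk : k = i
        · subst hk
          simp only [Pi.single_apply, eq_self_iff_true, if_true, eval_add, eval_mul, eval_X,
            map_one]
          ring
        · simp only [Pi.single_apply, if_neg hk, if_neg (Ne.symm hk), eval_add, eval_mul,
            eval_X, map_zero]
          ring
      rw [Finset.sum_congr rfl (fun k _ => hsum k), Finset.sum_add_distrib,
        Finset.sum_ite_eq' Finset.univ i (fun _ => eval x p * z i)]
      simp [add_comm, mul_comm, mul_assoc, mul_left_comm]
    rw [heq]
    simp only [map_mul, eval_X]
    exact h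

lemma continuous_evalP {n : ℕ} (p : MvPolynomial (Fin n) ℝ) :
    Continuous fun y : Fin n → ℝ => eval y p :=
  continuous_iff_continuousAt.2 fun y => (hasFDerivAt_eval p y).continuousAt

lemma toEuc_apply {n : ℕ} (v : Fin n → ℝ) (i : Fin n) : toEuc v i = v i := rfl

lemma toEuc_sub {n : ℕ} (a b : Fin n → ℝ) : toEuc (a - b) = toEuc a - toEuc b :=
  map_sub (EuclideanSpace.equiv (Fin n) ℝ).symm a b

lemma toEuc_smul {n : ℕ} (c : ℝ) (a : Fin n → ℝ) : toEuc (c • a) = c • toEuc a :=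
  map_smul (EuclideanSpace.equiv (Fin n) ℝ).symm c a

lemma norm_le_norm_toEuc {n : ℕ} (v : Fin n → ℝ) : ‖v‖ ≤ ‖toEuc v‖ := by
  rw [pi_norm_le_iff_of_nonneg (norm_nonneg _)]
  intro i
  rw [EuclideanSpace.norm_eq]
  have h1 : ‖v i‖ ^ 2 ≤ ∑ j, ‖toEuc v j‖ ^ 2 := by
    refine Finset.single_le_sum (f := fun j => ‖toEuc v j‖ ^ 2) (fun j _ => by positivity)
      (Finset.mem_univ i)
  calc ‖v i‖ = Real.sqrt (‖v i‖ ^ 2) := by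
        rw [Real.sqrt_sq (norm_nonneg _)]
    _ ≤ Real.sqrt (∑ j, ‖toEuc v j‖ ^ 2) := Real.sqrt_le_sqrt h1

lemma dist_le_dist_toEuc {n : ℕ} (a c : Fin n → ℝ) : dist a c ≤ dist (toEuc a) (toEuc c) := by
  rw [dist_eq_norm, dist_eq_norm, ← toEuc_sub]
  exact norm_le_norm_toEuc _

lemma toEuc_neg {n : ℕ} (a : Fin n → ℝ) : toEuc (-a) = -toEuc a :=
  map_neg (EuclideanSpace.equiv (Fin n) ℝ).symm a

theorem tangentCone_practical_semialgebraic {n s : ℕ} (r : Fin s → ℕ)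
    (b : (i : Fin s) → Fin (r i) → MvPolynomial (Fin n) ℝ)
    (Cpart : Fin s → Set (Fin n → ℝ))
    (hCi : ∀ i, Cpart i = ⋂ j : Fin (r i), {x : Fin n → ℝ | 0 ≤ eval x (b i j)})
    (Cset : Set (Fin n → ℝ)) (hC : Cset = ⋃ i, Cpart i)
    (hpractical : ∀ i, ∀ x ∈ Cpart i, ∃ z : Fin n → ℝ, ∀ j : Fin (r i),
      0 < eval x (b i j) + ∑ k, eval x (pderiv k (b i j)) * z k)
    (x : Fin n → ℝ) (hx : x ∈ Cset)
    (hTne : ∀ i, x ∈ Cpart i → ∃ j : Fin (r i), eval x (b i j) = 0) :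
    tangentConeAt' Cset x =
      ⋃ i ∈ {i : Fin s | x ∈ Cpart i},
        ⋂ j ∈ {j : Fin (r i) | eval x (b i j) = 0},
          {z : Fin n → ℝ | 0 ≤ ∑ k, eval x (pderiv k (b i j)) * z k} := by
  have hclosed : ∀ i, IsClosed (Cpart i) := by
    intro i
    rw [hCi i]
    exact isClosed_iInter fun j =>
      isClosed_le continuous_const (continuous_evalP (b i j))
  have hne : (toEuc '' Cset).Nonempty := ⟨toEuc x, x, hx, rfl⟩
  set F : Filter ℝ := nhdsWithin 0 (Set.Ioi (0 : ℝ)) with hF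
  ext z
  simp only [tangentConeAt', Set.mem_setOf_eq, Set.mem_iUnion, Set.mem_iInter]
  set f : ℝ → ℝ := fun τ => Metric.infDist (toEuc (x + τ • z)) (toEuc '' Cset) / τ
    with hfdef
  have hf0 : ∀ᶠ τ in F, 0 ≤ f τ := by
    filter_upwards [self_mem_nhdsWithin] with τ (hτ : (0:ℝ) < τ)
    exact div_nonneg Metric.infDist_nonneg hτ.le
  have hfub : ∀ᶠ τ in F, f τ ≤ ‖toEuc z‖ := by
    filter_upwards [self_mem_nhdsWithin] with τ (hτ : (0:ℝ) < τ)
    have h1 : Metric.infDist (toEuc (x + τ • z)) (toEuc '' Cset) ≤ τ * ‖toEuc z‖ := by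
      refine le_trans (Metric.infDist_le_dist_of_mem (Set.mem_image_of_mem _ hx)) ?_
      rw [dist_eq_norm, ← toEuc_sub]
      have : x + τ • z - x = τ • z := by abel
      rw [this, toEuc_smul, norm_smul, Real.norm_eq_abs, abs_of_pos hτ]
    rw [hfdef, div_le_iff₀ hτ]
    calc Metric.infDist (toEuc (x + τ • z)) (toEuc '' Cset) ≤ τ * ‖toEuc z‖ := h1
      _ = ‖toEuc z‖ * τ := by ring
  have hbdd : F.IsBoundedUnder (· ≥ ·) f := isBoundedUnder_of_eventually_ge hf0
  have hcob : F.IsCoboundedUnder (· ≥ ·) f := isCoboundedUnder_ge_of_eventually_le F hfub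
  constructor
  · -- tangent cone ⊆ linearization cone
    intro hz
    -- Step A: extract approximating sequences
    have hseq : ∀ m : ℕ, ∃ τ : ℝ, 0 < τ ∧ τ < 1/(m+1) ∧
        ∃ y ∈ Cset, dist (toEuc (x + τ • z)) (toEuc y) < τ * (1/(m+1)) := by
      intro m
      have hm : (0:ℝ) < 1/(m+1) := by positivity
      have h1 : liminf f F < 1/(m+1) := by rw [hz]; exact hm
      have hfreq : ∃ᶠ τ in F, f τ < 1/(m+1) := frequently_lt_of_liminf_lt hcob h1
      have hev : ∀ᶠ τ in F, τ ∈ Set.Ioo (0:ℝ) (1/(m+1)) :=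
        mem_nhdsWithin.2 ⟨Set.Iio (1/(m+1)), isOpen_Iio, hm, fun τ hτ => ⟨hτ.2, hτ.1⟩⟩
      obtain ⟨τ, hlt, hτ0, hτm⟩ := (hfreq.and_eventually hev).exists
      refine ⟨τ, hτ0, hτm, ?_⟩
      have hd : Metric.infDist (toEuc (x + τ • z)) (toEuc '' Cset) < τ * (1/(m+1)) := by
        rw [hfdef] at hlt
        have := (div_lt_iff₀ hτ0).1 hlt
        linarith [this]
      obtain ⟨u, ⟨y, hyC, rfl⟩, hu⟩ := (Metric.infDist_lt_iff hne).1 hd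
      exact ⟨y, hyC, hu⟩
    choose τ hτ0 hτm y hyC hdist using hseq
    -- basic estimates
    have hinv : ∀ m : ℕ, (0:ℝ) < 1/(m+1) := fun m => by positivity
    have hinvle : ∀ m : ℕ, (1:ℝ)/(m+1) ≤ 1 := by
      intro m
      rw [div_le_one (by positivity)]
      linarith [Nat.cast_nonneg (α := ℝ) m]
    have hest1 : ∀ m, ‖x + τ m • z - y m‖ < τ m * (1/(m+1)) := fun m =>
      lt_of_le_of_lt (by rw [← dist_eq_norm]; exact dist_le_dist_toEuc _ _) (hdist m)
    have hest2 : ∀ m, ‖x - y m‖ ≤ τ m * (‖z‖ + 1) := by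
      intro m
      have hsplit : x - y m = (x + τ m • z - y m) - τ m • z := by abel
      rw [hsplit]
      calc ‖(x + τ m • z - y m) - τ m • z‖ ≤ ‖x + τ m • z - y m‖ + ‖τ m • z‖ :=
            norm_sub_le _ _
        _ ≤ τ m * (1/(m+1)) + τ m * ‖z‖ := by
            refine add_le_add (hest1 m).le ?_
            rw [norm_smul, Real.norm_eq_abs, abs_of_pos (hτ0 m)]
        _ ≤ τ m * (‖z‖ + 1) := by nlinarith [(hτ0 m).le, hinvle m]
    have hτle : ∀ m, τ m ≤ 1/(m+1) := fun m => (hτm m).le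
    have hest3 : ∀ m, ‖x - y m‖ ≤ (1/(m+1)) * (‖z‖ + 1) := by
      intro m
      refine le_trans (hest2 m) ?_
      nlinarith [hτle m, hτ0 m, norm_nonneg z]
    -- pigeonhole
    have hmemU : ∀ m, ∃ i, y m ∈ Cpart i := by
      intro m
      have h := hyC m
      rw [hC] at h
      exact Set.mem_iUnion.1 h
    choose ι hι using hmemU
    obtain ⟨i, hinf⟩ := Finite.exists_infinite_fiber ι
    have hinf' : (ι ⁻¹' {i}).Infinite := Set.infinite_coe_iff.1 hinf
    have hbig : ∀ N : ℕ, ∃ k, N < k ∧ ι k = i := by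
      intro N
      obtain ⟨k, hk, hNk⟩ := hinf'.exists_gt N
      exact ⟨k, hNk, hk⟩
    have hmono : ∀ N k : ℕ, N < k → (1:ℝ)/(k+1) ≤ 1/(N+1) := by
      intro N k hNk
      apply div_le_div_of_nonneg_left one_pos.le (by positivity)
      have : (N:ℝ) ≤ (k:ℝ) := Nat.cast_le.2 hNk.le
      linarith
    -- x ∈ Cpart i
    have hxi : x ∈ Cpart i := by
      rw [← (hclosed i).closure_eq, Metric.mem_closure_iff]
      intro ε hε
      obtain ⟨N, hN⟩ := exists_nat_one_div_lt (show (0:ℝ) < ε / (‖z‖ + 1) by positivity)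
      obtain ⟨k, hNk, hk⟩ := hbig N
      refine ⟨y k, hk ▸ hι k, ?_⟩
      calc dist x (y k) = ‖x - y k‖ := dist_eq_norm _ _
        _ ≤ (1/(k+1)) * (‖z‖ + 1) := hest3 k
        _ ≤ (1/(N+1)) * (‖z‖ + 1) := by nlinarith [hmono N k hNk, norm_nonneg z]
        _ < (ε / (‖z‖ + 1)) * (‖z‖ + 1) := by nlinarith [norm_nonneg z, hinv N]
        _ = ε := by field_simp
    refine ⟨i, hxi, fun j hj => ?_⟩
    -- gradient inequality for active constraints
    rw [← evalLin_apply]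
    set L := evalLin (b i j) x with hLdef
    have hlittle := (hasFDerivAt_eval (b i j) x).isLittleO
    have key : ∀ ε : ℝ, 0 < ε → (0:ℝ) ≤ L z + ε := by
      intro ε hε
      have hε' : (0:ℝ) < ε / (2 * (‖z‖ + 1)) := by positivity
      have hev := hlittle.def hε'
      rw [Metric.eventually_nhds_iff] at hev
      obtain ⟨δ, hδ, hball⟩ := hev
      obtain ⟨N1, hN1⟩ := exists_nat_one_div_lt (show (0:ℝ) < δ / (‖z‖ + 1) by positivity)
      obtain ⟨N2, hN2⟩ := exists_nat_one_div_lt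
        (show (0:ℝ) < (ε/2) / (‖L‖ + 1) by positivity)
      obtain ⟨k, hk, hki⟩ := hbig (max N1 N2)
      have hk1 : (1:ℝ)/(k+1) < δ / (‖z‖ + 1) :=
        lt_of_le_of_lt (hmono N1 k (lt_of_le_of_lt (le_max_left _ _) hk)) hN1
      have hk2 : (1:ℝ)/(k+1) < (ε/2) / (‖L‖ + 1) :=
        lt_of_le_of_lt (hmono N2 k (lt_of_le_of_lt (le_max_right _ _) hk)) hN2
      have hyk : y k ∈ Cpart i := hki ▸ hι k
      have hyval : 0 ≤ eval (y k) (b i j) := by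
        rw [hCi i] at hyk
        exact Set.mem_iInter.1 hyk j
      have hdyx : dist (y k) x < δ := by
        rw [dist_eq_norm, norm_sub_rev]
        calc ‖x - y k‖ ≤ (1/(k+1)) * (‖z‖ + 1) := hest3 k
          _ < (δ / (‖z‖ + 1)) * (‖z‖ + 1) := by nlinarith [norm_nonneg z]
          _ = δ := by field_simp
      have happ := hball hdyx
      rw [hj, sub_zero] at happ
      -- decompose y k - x
      set e : Fin n → ℝ := y k - (x + τ k • z) with hedef
      have hyx : y k - x = τ k • z + e := by rw [hedef]; abel
      have hLsplit : L (y k - x) = τ k * L z + L e := by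
        rw [hyx, map_add, map_smul, smul_eq_mul]
      have hnorme : ‖e‖ ≤ τ k * (1/(k+1)) := by
        rw [hedef, norm_sub_rev]
        exact (hest1 k).le
      have hLe : |L e| ≤ ‖L‖ * (τ k * (1/(k+1))) := by
        calc |L e| = ‖L e‖ := (Real.norm_eq_abs _).symm
          _ ≤ ‖L‖ * ‖e‖ := L.le_opNorm e
          _ ≤ ‖L‖ * (τ k * (1/(k+1))) :=
              mul_le_mul_of_nonneg_left hnorme (norm_nonneg L)
      have hnyx : ‖y k - x‖ ≤ τ k * (‖z‖ + 1) := by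
        rw [norm_sub_rev]; exact hest2 k
      have habs : |eval (y k) (b i j) - L (y k - x)| ≤ ε / (2 * (‖z‖ + 1)) * ‖y k - x‖ := happ
      have hlow : -(ε / (2 * (‖z‖ + 1)) * (τ k * (‖z‖ + 1))) ≤ L (y k - x) := by
        have h1 := (abs_le.1 habs).2
        have h2 : ε / (2 * (‖z‖ + 1)) * ‖y k - x‖ ≤ ε / (2 * (‖z‖ + 1)) * (τ k * (‖z‖ + 1)) :=
          mul_le_mul_of_nonneg_left hnyx hε'.le
        nlinarith
      have heps1 : ε / (2 * (‖z‖ + 1)) * (τ k * (‖z‖ + 1)) = τ k * (ε/2) := by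
        field_simp
      have hLeup : L e ≤ ‖L‖ * (τ k * (1/(k+1))) := le_of_abs_le hLe
      have hτLz : -(τ k * (ε/2)) - ‖L‖ * (τ k * (1/(k+1))) ≤ τ k * L z := by
        linarith [hlow, hLeup, hLsplit, heps1]
      have hLk : ‖L‖ * (1/(k+1)) ≤ ε/2 := by
        have h1 : ‖L‖ * (1/(k+1)) ≤ ‖L‖ * ((ε/2) / (‖L‖ + 1)) :=
          mul_le_mul_of_nonneg_left hk2.le (norm_nonneg L)
        have h2 : ‖L‖ * ((ε/2) / (‖L‖ + 1)) ≤ ε/2 := by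
          rw [mul_div_assoc']
          rw [div_le_iff₀ (by positivity)]
          nlinarith [norm_nonneg L, hε]
        linarith
      have := hτ0 k
      nlinarith [hτLz, hLk, hτ0 k, mul_le_mul_of_nonneg_left hLk (hτ0 k).le]
    linarith [le_of_forall_pos_le_add key]
  · -- linearization cone ⊆ tangent cone
    rintro ⟨i, hxi, hactive⟩
    obtain ⟨z₀, hz₀⟩ := hpractical i x hxi
    -- eventual membership of perturbed rays
    have hmem : ∀ ε : ℝ, 0 < ε → ∀ᶠ τ in F, x + τ • (z + ε • z₀) ∈ Cset := by
      intro ε hε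
      set w := z + ε • z₀ with hw
      have hjall : ∀ j : Fin (r i), ∀ᶠ τ in F, 0 ≤ eval (x + τ • w) (b i j) := by
        intro j
        have hline : HasDerivAt (fun τ : ℝ => x + τ • w) w 0 := by
          simpa using ((hasDerivAt_id (0:ℝ)).smul_const w).const_add x
        have h0 : x + (0:ℝ) • w = x := by simp
        have hfd : HasFDerivAt (fun y => eval y (b i j)) (evalLin (b i j) x)
            ((fun τ : ℝ => x + τ • w) 0) := by
          rw [show (fun τ : ℝ => x + τ • w) 0 = x from h0]
          exact hasFDerivAt_eval (b i j) x
        have hcomp : HasDerivAt (fun τ : ℝ => eval (x + τ • w) (b i j))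
            (evalLin (b i j) x w) 0 := by
            have := hfd.comp_hasDerivAt 0 hline; exact this
        by_cases hact : eval x (b i j) = 0
        · -- active constraint: positive directional derivative
          have hLz : 0 ≤ evalLin (b i j) x z := by
            rw [evalLin_apply]; exact hactive j hact
          have hLz₀ : 0 < evalLin (b i j) x z₀ := by
            have h := hz₀ j
            rw [hact, zero_add] at h
            rw [evalLin_apply]; exact h
          have hLw : 0 < evalLin (b i j) x w := by
            rw [hw, map_add, map_smul, smul_eq_mul]
            nlinarith
          have hslope : Tendsto (slope (fun τ : ℝ => eval (x + τ • w) (b i j)) 0)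
              (nhdsWithin 0 {(0:ℝ)}ᶜ) (nhds (evalLin (b i j) x w)) :=
            hasDerivAt_iff_tendsto_slope.1 hcomp
          have hFle : F ≤ nhdsWithin 0 {(0:ℝ)}ᶜ :=
            nhdsWithin_mono 0 (fun t ht => ne_of_gt ht)
          have hevs : ∀ᶠ τ in F, 0 < slope (fun τ : ℝ => eval (x + τ • w) (b i j)) 0 τ :=
            (hslope.mono_left hFle).eventually (eventually_gt_nhds hLw)
          filter_upwards [hevs, self_mem_nhdsWithin] with τ hsl (hτ : (0:ℝ) < τ)
          rw [slope_def_field] at hsl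
          have hg0 : eval (x + (0:ℝ) • w) (b i j) = 0 := by rw [h0, hact]
          rw [hg0, sub_zero, sub_zero] at hsl
          have := mul_pos hτ hsl
          rw [mul_div_cancel₀ _ (ne_of_gt hτ)] at this
          exact this.le
        · -- inactive constraint: positive value
          have hpos : 0 < eval x (b i j) := by
            have hx0 : 0 ≤ eval x (b i j) := by
              have h := hxi
              rw [hCi i] at h
              exact Set.mem_iInter.1 h j
            exact lt_of_le_of_ne hx0 (Ne.symm hact)
          have hcont : Tendsto (fun τ : ℝ => eval (x + τ • w) (b i j)) (nhds 0)
              (nhds (eval (x + (0:ℝ) • w) (b i j))) := hcomp.continuousAt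
          rw [h0] at hcont
          have hevp : ∀ᶠ τ in nhds (0:ℝ), 0 < eval (x + τ • w) (b i j) :=
            hcont.eventually (eventually_gt_nhds hpos)
          exact (hevp.filter_mono nhdsWithin_le_nhds).mono fun τ h => h.le
      have hall : ∀ᶠ τ in F, ∀ j, 0 ≤ eval (x + τ • w) (b i j) := eventually_all.2 hjall
      filter_upwards [hall] with τ hτ
      rw [hC]
      refine Set.mem_iUnion.2 ⟨i, ?_⟩
      rw [hCi i]
      exact Set.mem_iInter.2 fun j => hτ j
    -- liminf upper bounds
    have hub : ∀ ε : ℝ, 0 < ε → liminf f F ≤ ε * ‖toEuc z₀‖ := by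
      intro ε hε
      have hev : ∀ᶠ τ in F, f τ ≤ ε * ‖toEuc z₀‖ := by
        filter_upwards [hmem ε hε, self_mem_nhdsWithin] with τ hτmem (hτ : (0:ℝ) < τ)
        have hd : Metric.infDist (toEuc (x + τ • z)) (toEuc '' Cset)
            ≤ τ * (ε * ‖toEuc z₀‖) := by
          have hmem' : toEuc (x + τ • (z + ε • z₀)) ∈ toEuc '' Cset :=
            Set.mem_image_of_mem _ hτmem
          refine le_trans (Metric.infDist_le_dist_of_mem hmem') ?_
          have heq : x + τ • (z + ε • z₀) = (x + τ • z) + (τ * ε) • z₀ := by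
            rw [smul_add, smul_smul]; abel
          rw [heq, dist_eq_norm, ← toEuc_sub]
          have hneg : x + τ • z - (x + τ • z + (τ * ε) • z₀) = -((τ * ε) • z₀) := by abel
          rw [hneg, toEuc_neg, norm_neg, toEuc_smul, norm_smul,
            Real.norm_eq_abs, abs_of_pos (by positivity), mul_assoc]
        rw [hfdef, div_le_iff₀ hτ]
        calc Metric.infDist (toEuc (x + τ • z)) (toEuc '' Cset) ≤ τ * (ε * ‖toEuc z₀‖) := hd
          _ = ε * ‖toEuc z₀‖ * τ := by ring
      exact liminf_le_of_frequently_le hev.frequently hbdd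
    refine le_antisymm ?_ (le_liminf_of_le hcob hf0)
    refine le_of_forall_pos_le_add fun ε hε => ?_
    have hc : (0:ℝ) < ε / (‖toEuc z₀‖ + 1) := by positivity
    have h1 := hub _ hc
    have h2 : ε / (‖toEuc z₀‖ + 1) * ‖toEuc z₀‖ ≤ ε := by
      rw [div_mul_eq_mul_div, div_le_iff₀ (by positivity)]
      nlinarith [norm_nonneg (toEuc z₀)]
    linarith
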